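/- Let γₙ denote the standard Gaussian measure on ℝⁿ and let f : ℝⁿ → ℝ be Lipschitz with constant L₀ ≥ 0. Let ρ ≥ 0 and suppose x ↦ f(x) + (ρ/2)‖x‖² is convex. Then for every u > 0, the Gaussian smoothing f_u(x) = ∫ f(x + u·z) dγₙ(z) satisfies that x ↦ f_u(x) + (ρ/2)‖x‖² is convex; i.e. Gaussian smoothing preserves ρ-weak convexity. -/

import Mathlib

open MeasureTheory ProbabilityTheory
open scoped NNReal ENNReal Real

/-- The standard Gaussian measure on `ℝⁿ`. -/
noncomputable def stdGaussian (n : ℕ) : Measure (EuclideanSpace ℝ (Fin n)) :=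
  Measure.map (MeasurableEquiv.toLp 2 (Fin n → ℝ)) (Measure.pi fun _ : Fin n => gaussianReal 0 1)

lemma normCombo {E : Type*} [NormedAddCommGroup E] [InnerProductSpace ℝ E]
    (p q : E) {a b : ℝ} (hab : a + b = 1) :
    a * ‖p‖ ^ 2 + b * ‖q‖ ^ 2 - ‖a • p + b • q‖ ^ 2 = a * b * ‖p - q‖ ^ 2 := by
  have hb : b = 1 - a := by linarith
  subst hb
  have h1 : ‖a • p + (1 - a) • q‖ ^ 2
      = a ^ 2 * ‖p‖ ^ 2 + 2 * (a * (1 - a)) * (inner ℝ p q : ℝ) + (1 - a) ^ 2 * ‖q‖ ^ 2 := by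
    rw [norm_add_sq_real, norm_smul, norm_smul, real_inner_smul_left, real_inner_smul_right,
      mul_pow, mul_pow, Real.norm_eq_abs, Real.norm_eq_abs, sq_abs, sq_abs]
    ring
  have h2 : ‖p - q‖ ^ 2 = ‖p‖ ^ 2 - 2 * (inner ℝ p q : ℝ) + ‖q‖ ^ 2 := by
    rw [norm_sub_sq_real]
  rw [h1, h2]; ring

lemma evalMP' (n : ℕ) (i : Fin n) :
    MeasurePreserving (fun z : Fin n → ℝ => z i)
      (Measure.pi fun _ : Fin n => gaussianReal 0 1) (gaussianReal 0 1) := by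
  refine ⟨measurable_pi_apply i, ?_⟩
  ext s hs
  rw [Measure.map_apply (measurable_pi_apply i) hs]
  have h : (fun z : Fin n → ℝ => z i) ⁻¹' s
      = Set.pi Set.univ (Function.update (fun _ => Set.univ) i s) := Set.eval_preimage
  rw [h, Measure.pi_pi]
  rw [Finset.prod_eq_single i (fun j _ hj => by simp [Function.update_of_ne hj]) (by simp)]
  simp

lemma evalMP (n : ℕ) (i : Fin n) :
    MeasurePreserving (fun z : EuclideanSpace ℝ (Fin n) => z i)
      (stdGaussian n) (gaussianReal 0 1) := by
  have hm : Measurable (fun z : EuclideanSpace ℝ (Fin n) => z i) :=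
    (measurable_pi_apply i).comp (MeasurableEquiv.toLp 2 (Fin n → ℝ)).symm.measurable
  refine ⟨hm, ?_⟩
  rw [_root_.stdGaussian, Measure.map_map hm (MeasurableEquiv.toLp 2 (Fin n → ℝ)).measurable]
  exact (evalMP' n i).map_eq

lemma integrable_sq_gaussian : Integrable (fun t : ℝ => t ^ 2) (gaussianReal 0 1) := by
  rw [gaussianReal_of_var_ne_zero 0 one_ne_zero,
    integrable_withDensity_iff (measurable_gaussianPDF 0 1)
      (ae_of_all _ fun x => ENNReal.ofReal_lt_top)]
  have h := integrable_rpow_mul_exp_neg_mul_sq (b := 1/2) (by norm_num) (s := 2) (by norm_num)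
  have heq : (fun x : ℝ => x ^ (2:ℝ) * Real.exp (-(1/2) * x ^ 2))
      = fun x : ℝ => x ^ 2 * Real.exp (-(1/2) * x ^ 2) := by
    funext x
    rw [show (2:ℝ) = ((2:ℕ):ℝ) by norm_num, Real.rpow_natCast]
  rw [heq] at h
  refine ((h.const_mul ((Real.sqrt (2 * Real.pi * ((1:ℝ≥0):ℝ)))⁻¹)).congr ?_)
  refine ae_of_all _ fun x => ?_
  dsimp only [gaussianPDF]
  rw [ENNReal.toReal_ofReal (gaussianPDFReal_nonneg _ _ _), gaussianPDFReal]
  have : -(x - 0) ^ 2 / (2 * ((1:ℝ≥0):ℝ)) = -(1/2) * x ^ 2 := by push_cast; ring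
  rw [this]; ring

/-- Gaussian smoothing preserves `ρ`-weak convexity: if `f` is `L₀`-Lipschitz and
`x ↦ f x + (ρ/2)‖x‖²` is convex, then `x ↦ f_u x + (ρ/2)‖x‖²` is convex, where
`f_u x = ∫ f (x + u • z) dγₙ(z)`. -/
theorem stmt5 (n : ℕ) (f : EuclideanSpace ℝ (Fin n) → ℝ) (L₀ : ℝ) (hL₀ : 0 ≤ L₀)
    (hf : ∀ x y, |f x - f y| ≤ L₀ * ‖x - y‖) (ρ : ℝ) (hρ : 0 ≤ ρ)
    (hconv : ConvexOn ℝ Set.univ (fun x => f x + ρ / 2 * ‖x‖ ^ 2)) (u : ℝ) (hu : 0 < u) :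
    ConvexOn ℝ Set.univ
      (fun x => (∫ z, f (x + u • z) ∂(stdGaussian n)) + ρ / 2 * ‖x‖ ^ 2) := by
  haveI : IsProbabilityMeasure (stdGaussian n) :=
    Measure.isProbabilityMeasure_map (MeasurableEquiv.toLp 2 (Fin n → ℝ)).measurable.aemeasurable
  -- continuity of f
  have hfc : Continuous f := by
    have hlip : LipschitzWith (Real.toNNReal L₀) f := by
      apply LipschitzWith.of_dist_le_mul
      intro x y
      rw [Real.dist_eq, Real.coe_toNNReal _ hL₀, dist_eq_norm]
      exact hf x y
    exact hlip.continuous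
  -- integrability of sum of squares
  have hS : Integrable (fun z : EuclideanSpace ℝ (Fin n) => ∑ i, (z i) ^ 2) (stdGaussian n) := by
    refine integrable_finset_sum _ fun i _ => ?_
    exact ((evalMP n i).integrable_comp
      (continuous_pow 2).aestronglyMeasurable).2 integrable_sq_gaussian
  -- norm squared identity
  have hnsq : ∀ z : EuclideanSpace ℝ (Fin n), ‖z‖ ^ 2 = ∑ i, (z i) ^ 2 := by
    intro z
    rw [EuclideanSpace.norm_eq, Real.sq_sqrt (by positivity)]
    simp [sq_abs]
  -- integrability of z ↦ f (x + u • z)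
  have hInt : ∀ x : EuclideanSpace ℝ (Fin n),
      Integrable (fun z => f (x + u • z)) (stdGaussian n) := by
    intro x
    have hmeas : AEStronglyMeasurable (fun z : EuclideanSpace ℝ (Fin n) => f (x + u • z))
        (stdGaussian n) :=
      (hfc.comp (continuous_const.add (continuous_id.const_smul u))).aestronglyMeasurable
    refine Integrable.mono' (g := fun z => (|f 0| + L₀ * ‖x‖ + L₀ * |u|)
        + L₀ * |u| * ∑ i, (z i) ^ 2) ((integrable_const _).add (hS.const_mul _)) hmeas ?_
    refine ae_of_all _ fun z => ?_
    dsimp only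
    have h0 : |f (x + u • z)| ≤ |f 0| + L₀ * ‖x + u • z‖ := by
      have := hf (x + u • z) 0
      rw [sub_zero] at this
      calc |f (x + u • z)| = |f 0 + (f (x + u • z) - f 0)| := by ring_nf
        _ ≤ |f 0| + |f (x + u • z) - f 0| := abs_add_le _ _
        _ ≤ |f 0| + L₀ * ‖x + u • z‖ := by linarith
    have h1 : ‖x + u • z‖ ≤ ‖x‖ + |u| * ‖z‖ := by
      calc ‖x + u • z‖ ≤ ‖x‖ + ‖u • z‖ := norm_add_le _ _
        _ = ‖x‖ + |u| * ‖z‖ := by rw [norm_smul, Real.norm_eq_abs]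
    have h2 : ‖z‖ ≤ 1 + ∑ i, (z i) ^ 2 := by
      have := hnsq z
      nlinarith [norm_nonneg z]
    have hLu : 0 ≤ L₀ * |u| := mul_nonneg hL₀ (abs_nonneg u)
    rw [Real.norm_eq_abs]
    have hA := mul_le_mul_of_nonneg_left h2 hLu
    have hB := mul_le_mul_of_nonneg_left h1 hL₀
    nlinarith [hA, hB, abs_nonneg u, norm_nonneg z]
  -- main convexity argument
  refine ⟨convex_univ, ?_⟩
  intro x _ y _ a b ha hb hab
  simp only [smul_eq_mul]
  set p := fun z : EuclideanSpace ℝ (Fin n) => x + u • z with hp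
  set q := fun z : EuclideanSpace ℝ (Fin n) => y + u • z with hq
  have hptw : ∀ z : EuclideanSpace ℝ (Fin n),
      f (a • x + b • y + u • z)
        ≤ a * f (x + u • z) + b * f (y + u • z) + ρ / 2 * (a * b * ‖x - y‖ ^ 2) := by
    intro z
    have hc : a • (x + u • z) + b • (y + u • z) = a • x + b • y + u • z := by
      rw [smul_add, smul_add]
      rw [show a • x + a • (u • z) + (b • y + b • (u • z))
          = a • x + b • y + (a + b) • (u • z) by rw [add_smul]; abel, hab, one_smul]
    have H := hconv.2 (Set.mem_univ (x + u • z)) (Set.mem_univ (y + u • z)) ha hb hab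
    simp only [smul_eq_mul, hc] at H
    have E := normCombo (x + u • z) (y + u • z) hab
    have hd : x + u • z - (y + u • z) = x - y := by abel
    rw [hd, hc] at E
    have E3 : ρ / 2 * (a * ‖x + u • z‖ ^ 2 + b * ‖y + u • z‖ ^ 2
        - ‖a • x + b • y + u • z‖ ^ 2) = ρ / 2 * (a * b * ‖x - y‖ ^ 2) := by rw [E]
    linarith [H, E3]
  have hmono : ∫ z, f (a • x + b • y + u • z) ∂(stdGaussian n)
      ≤ ∫ z, (a * f (x + u • z) + b * f (y + u • z) + ρ / 2 * (a * b * ‖x - y‖ ^ 2))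
          ∂(stdGaussian n) := by
    refine integral_mono (hInt _) ?_ hptw
    have h12 : Integrable (fun z : EuclideanSpace ℝ (Fin n)
        => a * f (x + u • z) + b * f (y + u • z)) (stdGaussian n) :=
      ((hInt x).const_mul a).add ((hInt y).const_mul b)
    exact h12.add (integrable_const _)
  have hsplit : ∫ z, (a * f (x + u • z) + b * f (y + u • z)
        + ρ / 2 * (a * b * ‖x - y‖ ^ 2)) ∂(stdGaussian n)
      = a * (∫ z, f (x + u • z) ∂(stdGaussian n))
        + b * (∫ z, f (y + u • z) ∂(stdGaussian n)) + ρ / 2 * (a * b * ‖x - y‖ ^ 2) := by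
    have h1 : Integrable (fun z : EuclideanSpace ℝ (Fin n) => a * f (x + u • z))
        (stdGaussian n) := (hInt x).const_mul a
    have h2 : Integrable (fun z : EuclideanSpace ℝ (Fin n) => b * f (y + u • z))
        (stdGaussian n) := (hInt y).const_mul b
    have h12 : Integrable (fun z : EuclideanSpace ℝ (Fin n)
        => a * f (x + u • z) + b * f (y + u • z)) (stdGaussian n) := h1.add h2
    rw [integral_add h12 (integrable_const _), integral_add h1 h2,
      integral_const_mul, integral_const_mul, integral_const]
    simp
  have E2 := normCombo x y hab
  have E4 : ρ / 2 * (a * ‖x‖ ^ 2 + b * ‖y‖ ^ 2 - ‖a • x + b • y‖ ^ 2)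
      = ρ / 2 * (a * b * ‖x - y‖ ^ 2) := by rw [E2]
  rw [hsplit] at hmono
  linarith [hmono, E4]
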